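/- arXiv:2006.15562 — 8 statements merged into one kernel-verified Lean document; each statement's English description precedes it below -/
import Mathlib

section
/- For any L > 0 and any x, y ∈ ℝ with |y - x| ≤ L, the sum over all integers m of e^{-|y - (x + mL)|} equals cosh(|y - x| - L/2) / sinh(L/2). -/
theorem periodized_exponential_kernel (L x y : ℝ) (hL : 0 < L) (h : |y - x| ≤ L) :
    ∑' m : ℤ, Real.exp (-|y - (x + (m : ℝ) * L)|) =
      Real.cosh (|y - x| - L / 2) / Real.sinh (L / 2) := by
  have habs : |y - x| ≤ L := h
  set t := y - x with ht
  set r := Real.exp (-L) with hr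
  have hr0 : 0 < r := Real.exp_pos _
  have hr1 : r < 1 := by rw [hr, Real.exp_lt_one_iff]; linarith
  have htL : t ≤ L := le_trans (le_abs_self t) habs
  have htL' : -L ≤ t := neg_le_of_abs_le habs
  -- the function on ℤ
  set f : ℤ → ℝ := fun m ↦ Real.exp (-|y - (x + (m : ℝ) * L)|) with hf
  have hfval : ∀ m : ℤ, f m = Real.exp (-|t - (m : ℝ) * L|) := by
    intro m; simp only [hf, ht]; ring_nf
  -- positive shifted part
  have hpos : ∀ n : ℕ, Real.exp (-|t - ((n : ℝ) + 1) * L|) = Real.exp t * r * r ^ n := by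
    intro n
    have h1 : t - ((n : ℝ) + 1) * L ≤ 0 := by nlinarith [Nat.cast_nonneg (α := ℝ) n]
    rw [abs_of_nonpos h1, neg_neg,
      show t - ((n : ℝ) + 1) * L = t + -L + (n : ℝ) * (-L) by ring,
      Real.exp_add, Real.exp_add, Real.exp_nat_mul, hr]
  -- negative part
  have hneg : ∀ n : ℕ, Real.exp (-|t + ((n : ℝ) + 1) * L|) = Real.exp (-t) * r * r ^ n := by
    intro n
    have h1 : 0 ≤ t + ((n : ℝ) + 1) * L := by nlinarith [Nat.cast_nonneg (α := ℝ) n]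
    rw [abs_of_nonneg h1,
      show -(t + ((n : ℝ) + 1) * L) = -t + -L + (n : ℝ) * (-L) by ring,
      Real.exp_add, Real.exp_add, Real.exp_nat_mul, hr]
  have hgeo : HasSum (fun n : ℕ ↦ r ^ n) (1 - r)⁻¹ :=
    hasSum_geometric_of_lt_one (le_of_lt hr0) hr1
  have h1 : HasSum (fun n : ℕ ↦ f ((n : ℤ) + 1)) (Real.exp t * r * (1 - r)⁻¹) := by
    have := hgeo.mul_left (Real.exp t * r)
    refine this.congr_fun fun n ↦ ?_
    rw [hfval, Int.cast_add, Int.cast_natCast, Int.cast_one, hpos n]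
  have h1' : HasSum (fun n : ℕ ↦ f n)
      (Real.exp t * r * (1 - r)⁻¹ + Real.exp (-|t|)) := by
    have := (hasSum_nat_add_iff (f := fun n : ℕ ↦ f n) 1).mp
      (h1.congr_fun fun n ↦ by push_cast; ring_nf)
    have hf0 : f 0 = Real.exp (-|t|) := by rw [hfval]; norm_num
    simpa [hf0] using this
  have h2 : HasSum (fun n : ℕ ↦ f (-((n : ℤ) + 1))) (Real.exp (-t) * r * (1 - r)⁻¹) := by
    have := hgeo.mul_left (Real.exp (-t) * r)
    refine this.congr_fun fun n ↦ ?_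
    rw [hfval]
    push_cast
    rw [show t - -((n : ℝ) + 1) * L = t + ((n : ℝ) + 1) * L by ring, hneg n]
  have htotal : HasSum f
      ((Real.exp t * r * (1 - r)⁻¹ + Real.exp (-|t|)) + Real.exp (-t) * r * (1 - r)⁻¹) :=
    h1'.of_nat_of_neg_add_one h2
  rw [htotal.tsum_eq]
  -- algebra
  have hsym : Real.exp t + Real.exp (-t) = Real.exp |t| + Real.exp (-|t|) := by
    rcases abs_cases t with ⟨h1, _⟩ | ⟨h1, _⟩ <;> rw [h1] <;> ring
  have key : Real.exp t * r * (1 - r)⁻¹ + Real.exp (-t) * r * (1 - r)⁻¹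
      = (Real.exp |t| + Real.exp (-|t|)) * r * (1 - r)⁻¹ := by
    rw [← add_mul, ← add_mul, hsym]
  rw [show (Real.exp t * r * (1 - r)⁻¹ + Real.exp (-|t|)) + Real.exp (-t) * r * (1 - r)⁻¹
      = (Real.exp t * r * (1 - r)⁻¹ + Real.exp (-t) * r * (1 - r)⁻¹) + Real.exp (-|t|) by ring,
    key, Real.cosh_eq, Real.sinh_eq]
  have e1 : Real.exp (|t| - L / 2) = Real.exp |t| / Real.exp (L / 2) := Real.exp_sub _ _
  have e2 : Real.exp (-(|t| - L / 2)) = Real.exp (L / 2) / Real.exp |t| := by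
    rw [neg_sub, Real.exp_sub]
  have e3 : Real.exp (-|t|) = 1 / Real.exp |t| := by
    rw [Real.exp_neg]; ring
  have e4 : Real.exp (-(L / 2)) = 1 / Real.exp (L / 2) := by
    rw [Real.exp_neg]; ring
  have e5 : r = 1 / (Real.exp (L / 2) * Real.exp (L / 2)) := by
    rw [hr, ← Real.exp_add, Real.exp_neg]
    norm_num
  rw [e1, e2, e3, e4, e5]
  have hb : (1 : ℝ) < Real.exp (L / 2) := by
    rw [Real.one_lt_exp_iff]; linarith
  set a := Real.exp |t| with ha
  set b := Real.exp (L / 2) with hbdef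
  have ha0 : 0 < a := Real.exp_pos _
  have hb0 : 0 < b := Real.exp_pos _
  have hne : 1 - 1 / (b * b) ≠ 0 := by
    have h1 : 1 / (b * b) < 1 := by
      rw [div_lt_one (by positivity)]; nlinarith
    intro hc; linarith
  have hne2 : (b - 1 / b) / 2 ≠ 0 := by
    have : 1 / b < 1 := by
      rw [div_lt_one hb0]; linarith
    intro hc
    rw [div_eq_zero_iff] at hc
    rcases hc with hc | hc
    · rw [sub_eq_zero] at hc; linarith
    · norm_num at hc
  have hbb1 : b * b - 1 ≠ 0 := by nlinarith
  have hbb2 : b * b ≠ 1 := by intro hc; apply hbb1; rw [hc]; ring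
  field_simp
  have hI : (-1 + b ^ 2)⁻¹ * (-1 + b ^ 2) = 1 :=
    inv_mul_cancel₀ (by intro hc; apply hbb2; linear_combination hc)
  linear_combination (-1 : ℝ) * hI
end

section
/- Let a₀,…,a_{n-1} be nonnegative reals and let A_j = [[1 + a_j², a_j], [a_j, 1]]. Then the trace of the product Π = A_{n-1}·A_{n-2}···A_0 satisfies tr(Π) - 2 ≥ (∑_{j=0}^{n-1} a_j)². -/
lemma transfer_product_key (a : ℕ → ℝ) (ha : ∀ j, 0 ≤ a j) (n : ℕ) :
    let P := (((List.range n).reverse.map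
        (fun j => (!![1 + (a j) ^ 2, a j; a j, 1] : Matrix (Fin 2) (Fin 2) ℝ))).prod)
    let S := ∑ j ∈ Finset.range n, a j
    1 ≤ P 0 0 ∧ S ≤ P 0 1 ∧ S ≤ P 1 0 ∧ 1 ≤ P 1 1 ∧ S ^ 2 ≤ P 0 0 + P 1 1 - 2 := by
  induction n with
  | zero =>
    norm_num [Matrix.one_apply]
  | succ n ih =>
    obtain ⟨h1, h2, h3, h4, h5⟩ := ih
    have hS : 0 ≤ ∑ j ∈ Finset.range n, a j := Finset.sum_nonneg fun j _ => ha j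
    have han := ha n
    set P := (((List.range n).reverse.map
        (fun j => (!![1 + (a j) ^ 2, a j; a j, 1] : Matrix (Fin 2) (Fin 2) ℝ))).prod) with hP
    have hprod : (((List.range (n+1)).reverse.map
        (fun j => (!![1 + (a j) ^ 2, a j; a j, 1] : Matrix (Fin 2) (Fin 2) ℝ))).prod)
        = !![1 + (a n) ^ 2, a n; a n, 1] * P := by
      rw [List.range_succ, List.reverse_append]
      simp [hP]
    simp only [hprod, Finset.sum_range_succ, Matrix.mul_apply, Fin.sum_univ_two,
      Matrix.cons_val', Matrix.cons_val_zero, Matrix.cons_val_one, Matrix.head_cons,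
      Matrix.empty_val', Matrix.cons_val_fin_one, Matrix.head_fin_const, Matrix.of_apply]
    refine ⟨?_, ?_, ?_, ?_, ?_⟩ <;> nlinarith [sq_nonneg (a n), mul_nonneg han hS]

theorem trace_of_transfer_product_lower_bound (n : ℕ) (hn : 1 ≤ n) (a : ℕ → ℝ)
    (ha : ∀ j, 0 ≤ a j) :
    Matrix.trace (((List.range n).reverse.map
        (fun j => (!![1 + (a j) ^ 2, a j; a j, 1] : Matrix (Fin 2) (Fin 2) ℝ))).prod) - 2 ≥
      (∑ j ∈ Finset.range n, a j) ^ 2 := by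
  obtain ⟨-, -, -, -, h5⟩ := transfer_product_key a ha n
  rw [Matrix.trace_fin_two]
  linarith
end

section
/- Let a₀,…,a_{n-1} be nonnegative reals with ∑_{j=0}^{n-1} a_j = L > 0, and A_j = [[1 + a_j², a_j], [a_j, 1]]. Then the product Π = A_{n-1}···A_0 satisfies det(Π) = 1 and tr(Π) ≥ 2 + L², so Π - I is invertible. -/
lemma transfer_key (a : ℕ → ℝ) (ha : ∀ j, 0 ≤ a j) (n : ℕ) :
    ∀ P : Matrix (Fin 2) (Fin 2) ℝ, P = ((List.range n).reverse.map
        (fun j => (!![1 + (a j) ^ 2, a j; a j, 1] : Matrix (Fin 2) (Fin 2) ℝ))).prod →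
    P.det = 1 ∧ 1 ≤ P 0 0 ∧ 1 ≤ P 1 1 ∧ (∑ j ∈ Finset.range n, a j) ≤ P 0 1 ∧
      (∑ j ∈ Finset.range n, a j) ≤ P 1 0 ∧
      2 + (∑ j ∈ Finset.range n, a j) ^ 2 ≤ P 0 0 + P 1 1 := by
  induction n with
  | zero =>
    intro P hP
    simp at hP
    subst hP
    norm_num [Matrix.one_apply]
  | succ n ih =>
    intro Q hQ
    set P : Matrix (Fin 2) (Fin 2) ℝ := ((List.range n).reverse.map
        (fun j => (!![1 + (a j) ^ 2, a j; a j, 1] : Matrix (Fin 2) (Fin 2) ℝ))).prod with hP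
    obtain ⟨hdet, h00, h11, h01, h10, htr⟩ := ih P rfl
    have hQP : Q = (!![1 + (a n) ^ 2, a n; a n, 1] : Matrix (Fin 2) (Fin 2) ℝ) * P := by
      rw [hQ, List.range_succ, List.reverse_append, List.map_append, List.prod_append]
      simp [hP]
    have han := ha n
    have hS : 0 ≤ ∑ j ∈ Finset.range n, a j := Finset.sum_nonneg fun j _ => ha j
    have e00 : Q 0 0 = (1 + (a n) ^ 2) * P 0 0 + a n * P 1 0 := by
      rw [hQP]; simp [Matrix.mul_apply, Fin.sum_univ_two]
    have e01 : Q 0 1 = (1 + (a n) ^ 2) * P 0 1 + a n * P 1 1 := by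
      rw [hQP]; simp [Matrix.mul_apply, Fin.sum_univ_two]
    have e10 : Q 1 0 = a n * P 0 0 + P 1 0 := by
      rw [hQP]; simp [Matrix.mul_apply, Fin.sum_univ_two]
    have e11 : Q 1 1 = a n * P 0 1 + P 1 1 := by
      rw [hQP]; simp [Matrix.mul_apply, Fin.sum_univ_two]
    rw [Finset.sum_range_succ]
    refine ⟨?_, ?_, ?_, ?_, ?_, ?_⟩
    · rw [hQP, Matrix.det_mul, hdet, Matrix.det_fin_two_of]; ring
    · rw [e00]; nlinarith
    · rw [e11]; nlinarith
    · rw [e01]; nlinarith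
    · rw [e10]; nlinarith
    · rw [e00, e11]; nlinarith

theorem transfer_product_minus_id_invertible (n : ℕ) (hn : 1 ≤ n) (L : ℝ) (hL : 0 < L)
    (a : ℕ → ℝ) (ha : ∀ j, 0 ≤ a j) (hsum : ∑ j ∈ Finset.range n, a j = L) :
    let P : Matrix (Fin 2) (Fin 2) ℝ := ((List.range n).reverse.map
        (fun j => (!![1 + (a j) ^ 2, a j; a j, 1] : Matrix (Fin 2) (Fin 2) ℝ))).prod
    P.det = 1 ∧ Matrix.trace P ≥ 2 + L ^ 2 ∧ IsUnit (P - 1) := by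
  intro P
  obtain ⟨hdet, h00, h11, h01, h10, htr⟩ := transfer_key a ha n P rfl
  rw [hsum] at h01 h10 htr
  have hS : 0 ≤ L := hL.le
  have htrace : Matrix.trace P = P 0 0 + P 1 1 := Matrix.trace_fin_two P
  refine ⟨hdet, by rw [htrace]; linarith, ?_⟩
  rw [Matrix.isUnit_iff_isUnit_det, isUnit_iff_ne_zero]
  have hdet2 : P.det = P 0 0 * P 1 1 - P 0 1 * P 1 0 := Matrix.det_fin_two P
  have : (P - 1).det = (P 0 0 - 1) * (P 1 1 - 1) - P 0 1 * P 1 0 := by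
    rw [Matrix.det_fin_two]
    simp [Matrix.sub_apply, Matrix.one_apply]
  rw [this]
  nlinarith
end

section
/- Let n ≥ 1 and let y : ℤ → ℝ satisfy y_{i+n} = y_i + L with L > 0 and y_{i+1} ≥ y_i for all i. Let Δξ = L/n and let A be the 2n×2n matrix with diagonal entries A_{2j,2j} = A_{2j+1,2j+1} = (y_{j+1} - y_j)/Δξ, superdiagonal entries -1/Δξ, subdiagonal entries 1/Δξ, corner entries A_{0,2n-1} = 1/Δξ and A_{2n-1,0} = -1/Δξ, and zeros elsewhere. Then A is invertible, and moreover det(A) ≥ n^{2n}/L^{2n-2}. -/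
open Matrix Finset



section Generic
variable {ι : Type*} [Fintype ι] [DecidableEq ι]

omit [DecidableEq ι] in
lemma dotProduct_self_nonneg' (x : ι → ℝ) : 0 ≤ dotProduct x x :=
  Finset.sum_nonneg fun i _ => mul_self_nonneg (x i)

/-- A real skew-symmetric matrix has nonnegative determinant. -/
lemma skew_det_nonneg (B : Matrix ι ι ℝ) (hB : Bᵀ = -B) : 0 ≤ B.det := by
  have htr : ∀ M : Matrix ι ι ℝ, Mᴴ = Mᵀ := fun M => Matrix.ext fun i j => by
    simp [conjTranspose_apply]
  set p : ℝ → ℝ := fun t => (t • (1 : Matrix ι ι ℝ) + B).det with hp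
  have hcont : Continuous p :=
    (Continuous.add (continuous_id.smul continuous_const) continuous_const).matrix_det
  have hform : ∀ t : ℝ, (t • (1 : Matrix ι ι ℝ) + B) * (t • (1 : Matrix ι ι ℝ) + B)ᵀ
      = (t * t) • (1 : Matrix ι ι ℝ) + B * Bᵀ := by
    intro t
    conv_lhs => rw [transpose_add, transpose_smul, transpose_one, hB]
    conv_rhs => rw [hB]
    simp only [mul_add, add_mul, Matrix.smul_mul, Matrix.mul_smul, smul_smul, one_mul,
      mul_one, smul_neg, mul_neg]
    abel
  -- key: p t ≠ 0 for t ≠ 0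
  have hkey : ∀ t : ℝ, t ≠ 0 → p t ≠ 0 := by
    intro t ht
    have hpd : ((t * t) • (1 : Matrix ι ι ℝ) + B * Bᵀ).PosDef := by
      refine Matrix.posDef_iff_dotProduct_mulVec.mpr ⟨?_, ?_⟩
      · show _ᴴ = _
        rw [htr, transpose_add, transpose_smul, transpose_one, transpose_mul,
          transpose_transpose]
      · intro x hx
        have hsx : star x = x := by simp
        rw [hsx, Matrix.add_mulVec, dotProduct_add, Matrix.smul_mulVec,
          Matrix.one_mulVec, dotProduct_smul]
        have h1 : 0 < dotProduct x x := by
          rcases lt_or_eq_of_le (dotProduct_self_nonneg' x) with h | h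
          · exact h
          · exact absurd (dotProduct_self_eq_zero.mp h.symm) hx
        have h2 : 0 ≤ dotProduct x ((B * Bᵀ) *ᵥ x) := by
          rw [← Matrix.mulVec_mulVec, Matrix.dotProduct_mulVec, ← Matrix.mulVec_transpose]
          exact dotProduct_self_nonneg' _
        have ht2 : 0 < t * t := by
          rcases ht.lt_or_gt with h | h
          · exact mul_pos_of_neg_of_neg h h
          · exact mul_pos h h
        have hsm : (t*t) • dotProduct x x = (t*t) * dotProduct x x := rfl
        rw [smul_eq_mul]
        nlinarith [h1, h2]
    have hdd : (0:ℝ) < p t * p t := by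
      have h : p t * p t = ((t • (1 : Matrix ι ι ℝ) + B) * (t • (1 : Matrix ι ι ℝ) + B)ᵀ).det := by
        rw [det_mul, det_transpose, hp]
      rw [h, hform]
      exact hpd.det_pos
    intro h0
    rw [h0] at hdd; simp at hdd
  -- p is eventually positive
  have hq : Continuous fun s : ℝ => (1 + s • B : Matrix ι ι ℝ).det :=
    (Continuous.add continuous_const (continuous_id.smul continuous_const)).matrix_det
  have hev : ∀ᶠ s in nhds (0:ℝ), (0:ℝ) < (1 + s • B : Matrix ι ι ℝ).det := by
    refine continuousAt_const.eventually_lt hq.continuousAt ?_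
    simp
  obtain ⟨δ, hδpos, hδ⟩ := Metric.eventually_nhds_iff.mp hev
  set T : ℝ := 2 / δ + 1 with hT
  have hTpos : 0 < T := by positivity
  have hTinv : T⁻¹ < δ := by
    have h2 : δ⁻¹ < T := by
      rw [hT]
      have : δ⁻¹ < 2/δ := by
        rw [div_eq_mul_inv]
        linarith [inv_pos.mpr hδpos]
      linarith
    calc T⁻¹ < (δ⁻¹)⁻¹ := by gcongr
    _ = δ := inv_inv δ
  have hpT : 0 < p T := by
    have hsplit : T • (1 : Matrix ι ι ℝ) + B = T • (1 + T⁻¹ • B : Matrix ι ι ℝ) := by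
      rw [smul_add, smul_smul, mul_inv_cancel₀ (ne_of_gt hTpos), one_smul]
    have : p T = T ^ (Fintype.card ι) * (1 + T⁻¹ • B : Matrix ι ι ℝ).det := by
      rw [hp]; simp only []
      rw [hsplit, Matrix.det_smul]
    rw [this]
    have hqq : (0:ℝ) < (1 + T⁻¹ • B : Matrix ι ι ℝ).det := by
      apply hδ
      rw [Real.dist_eq, sub_zero, abs_of_pos (inv_pos.mpr hTpos)]
      exact hTinv
    positivity
  -- conclude with IVT
  by_contra hneg
  push_neg at hneg
  have hp0 : p 0 = B.det := by rw [hp]; simp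
  have h0T : (0:ℝ) ≤ T := le_of_lt hTpos
  have := intermediate_value_Icc h0T hcont.continuousOn
  have h0mem : (0:ℝ) ∈ Set.Icc (p 0) (p T) := ⟨by rw [hp0]; linarith, le_of_lt hpT⟩
  obtain ⟨c, hc, hc0⟩ := this h0mem
  have hcne : c ≠ 0 := by
    intro h; rw [h, hp0] at hc0; linarith
  exact hkey c hcne hc0

end Generic



section Expand
variable {ι : Type*} [Fintype ι] [DecidableEq ι]

/-- Expansion of `det (diagonal d + B)` over subsets of rows. -/
lemma det_diagonal_add (d : ι → ℝ) (B : Matrix ι ι ℝ) :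
    (Matrix.diagonal d + B).det
      = ∑ s : Finset ι, (∏ i ∈ s, d i) *
          (B.submatrix (Subtype.val : {a : ι // a ∉ s} → ι) Subtype.val).det := by
  have h0 : (Matrix.diagonal d + B).det
      = ∑ s : Finset ι, (Matrix.detRowAlternating (s.piecewise (Matrix.diagonal d) B) : ℝ) := by
    exact (Matrix.detRowAlternating : ((ι → ℝ) [⋀^ι]→ₗ[ℝ] ℝ)).toMultilinearMap.map_add_univ
      (Matrix.diagonal d) B
  rw [h0]
  refine Finset.sum_congr rfl fun s _ => ?_
  -- pull out the scalars d i on rows in s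
  have hpw : s.piecewise (Matrix.diagonal d) B
      = fun i => (if i ∈ s then d i else 1) • (if i ∈ s then Pi.single i (1:ℝ) else B i) := by
    funext i j
    by_cases hi : i ∈ s
    · simp [Finset.piecewise, hi, Matrix.diagonal, Pi.single_apply, eq_comm]
    · simp [Finset.piecewise, hi]
  rw [hpw]
  have hsm := (Matrix.detRowAlternating :
      ((ι → ℝ) [⋀^ι]→ₗ[ℝ] ℝ)).toMultilinearMap.map_smul_univ
    (fun i => if i ∈ s then d i else 1) (fun i => if i ∈ s then Pi.single i (1:ℝ) else B i)
  simp only [AlternatingMap.coe_multilinearMap] at hsm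
  rw [hsm]
  have hprod : (∏ i, if i ∈ s then d i else 1) = ∏ i ∈ s, d i := by
    rw [Finset.prod_ite_mem, Finset.univ_inter]
  rw [hprod, smul_eq_mul]
  congr 1
  -- compute the determinant of the matrix whose rows in s are unit vectors
  set M : Matrix ι ι ℝ := fun i => (if i ∈ s then Pi.single i (1:ℝ) else B i) with hM
  have : (Matrix.detRowAlternating M : ℝ) = M.det := rfl
  rw [this]
  let e : {a : ι // a ∈ s} ⊕ {a : ι // ¬ a ∈ s} ≃ ι := Equiv.sumCompl (· ∈ s)
  rw [← Matrix.det_submatrix_equiv_self e M]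
  have hblocks : M.submatrix e e
      = Matrix.fromBlocks (1 : Matrix {a : ι // a ∈ s} {a : ι // a ∈ s} ℝ) 0
          (B.submatrix (Subtype.val : {a : ι // ¬ a ∈ s} → ι) (Subtype.val : {a : ι // a ∈ s} → ι))
          (B.submatrix (Subtype.val : {a : ι // ¬ a ∈ s} → ι) Subtype.val) := by
    ext z w
    rcases z with z | z <;> rcases w with w | w <;>
      simp only [Matrix.submatrix, Matrix.of_apply, Matrix.submatrix_apply, hM, e, Equiv.sumCompl_apply_inl,
        Equiv.sumCompl_apply_inr, Matrix.fromBlocks_apply₁₁, Matrix.fromBlocks_apply₁₂,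
        Matrix.fromBlocks_apply₂₁, Matrix.fromBlocks_apply₂₂]
    · simp only [z.2, ↓reduceIte]
      rw [Matrix.one_apply, Pi.single_apply]
      by_cases h : z = w
      · simp [h]
      · rw [if_neg h, if_neg]
        intro hh
        exact h (Subtype.ext hh.symm)
    · simp only [z.2, ↓reduceIte]
      rw [Pi.single_apply,
        if_neg (fun hh : (↑w : ι) = ↑z => w.2 (hh ▸ z.2))]
      simp
    · simp only [z.2, ↓reduceIte]
    · simp only [z.2, ↓reduceIte]
  rw [hblocks, Matrix.det_fromBlocks_zero₁₂, Matrix.det_one, one_mul]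

end Expand



/-- Skew tridiagonal "path" matrix. -/
def pathM (a : ℝ) (m : ℕ) : Matrix (Fin m) (Fin m) ℝ :=
  Matrix.of fun i j => if (j:ℕ) = (i:ℕ) + 1 then -a else if (i:ℕ) = (j:ℕ) + 1 then a else 0

lemma pathM_step (a : ℝ) (m : ℕ) : (pathM a (m+2)).det = (a * a) * (pathM a m).det := by
  have hcol0 : (Fin.succAbove (1 : Fin (m+2))) (0 : Fin (m+1)) = 0 := by
    rw [Fin.succAbove_of_castSucc_lt]
    · rfl
    · simp [Fin.lt_def]
  rw [Matrix.det_succ_row_zero]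
  rw [Finset.sum_eq_single (1 : Fin (m+2))]
  · -- the j = 1 term
    have hval : (pathM a (m+2)) 0 (1 : Fin (m+2)) = -a := by
      simp [pathM]
    rw [hval]
    rw [Matrix.det_succ_column_zero]
    rw [Finset.sum_eq_single (0 : Fin (m+1))]
    · have hval2 : ((pathM a (m+2)).submatrix Fin.succ (Fin.succAbove 1)) (0 : Fin (m+1)) 0 = a := by
        rw [Matrix.submatrix_apply, hcol0]
        simp [pathM]
      rw [hval2]
      have hsub : ((pathM a (m+2)).submatrix Fin.succ (Fin.succAbove 1)).submatrix
          (Fin.succAbove (0 : Fin (m+1))) Fin.succ = pathM a m := by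
        ext i j
        rw [Matrix.submatrix_apply, Matrix.submatrix_apply]
        have hr : (Fin.succAbove (0 : Fin (m+1))) i = i.succ := by
          rw [Fin.succAbove_zero]
        have hc : (Fin.succAbove (1 : Fin (m+2))) j.succ = j.succ.succ := by
          rw [Fin.succAbove_of_le_castSucc]
          simp [Fin.le_def]
        rw [hr, hc]
        simp only [pathM, Matrix.of_apply, Fin.val_succ]
        split_ifs <;> first | rfl | omega
      rw [hsub]
      simp [Fin.val_one]
      ring
    · intro b _ hb
      have hz : ((pathM a (m+2)).submatrix Fin.succ (Fin.succAbove 1)) b 0 = 0 := by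
        rw [Matrix.submatrix_apply, hcol0]
        have hv0 : ((0 : Fin (m+2)) : ℕ) = 0 := rfl
        simp only [pathM, Matrix.of_apply, Fin.val_succ, hv0]
        rw [if_neg (by omega), if_neg]
        intro h
        exact hb (Fin.ext (by simpa using (by omega : (b:ℕ) = 0)))
      rw [hz]; ring
    · simp
  · intro b _ hb
    have hz : (pathM a (m+2)) 0 b = 0 := by
      simp only [pathM, Matrix.of_apply, Fin.val_zero]
      split_ifs with h h'
      · exfalso; apply hb; apply Fin.ext; rw [h]; simp
      · simp at h'
      · rfl
    rw [hz]; ring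
  · simp

lemma pathM_det_even (a : ℝ) (k : ℕ) : (pathM a (2 * k)).det = a ^ (2 * k) := by
  induction k with
  | zero =>
      rw [Nat.mul_zero, pow_zero]
      exact Matrix.det_fin_zero
  | succ k ih =>
      have h2 : 2 * (k + 1) = 2 * k + 2 := by ring
      rw [h2, pathM_step, ih]
      ring




def cvec (a : ℝ) (N : ℕ) : Fin N → ℝ :=
  fun z => if (z:ℕ) = 1 then a else if (z:ℕ) = N - 1 then -a else 0

def Smat (a : ℝ) (N : ℕ) : Matrix (Fin N) (Fin N) ℝ :=
  Matrix.of fun i j => cvec a N (i - j)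

lemma fin_sub_val {N : ℕ} (u w : Fin N) :
    ((u - w : Fin N) : ℕ) = if (w:ℕ) ≤ (u:ℕ) then (u:ℕ) - (w:ℕ) else (u:ℕ) + (N - (w:ℕ)) := by
  have hu := u.isLt
  have hw := w.isLt
  rw [Fin.sub_def]
  show (N - (w:ℕ) + (u:ℕ)) % N = _
  rcases le_or_gt (w:ℕ) (u:ℕ) with h | h
  · rw [if_pos h]
    have h1 : N - (w:ℕ) + (u:ℕ) = ((u:ℕ) - (w:ℕ)) + N := by omega
    rw [h1, Nat.add_mod_right, Nat.mod_eq_of_lt (by omega)]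
  · rw [if_neg (not_le.mpr h), Nat.mod_eq_of_lt (by omega)]
    omega

lemma Smat_apply_eq (a : ℝ) {N : ℕ} (hN : 3 ≤ N) (u w : Fin N) :
    Smat a N u w = if (u:ℕ) = (w:ℕ) + 1 ∨ ((u:ℕ) = 0 ∧ (w:ℕ) = N - 1) then a
      else if (w:ℕ) = (u:ℕ) + 1 ∨ ((w:ℕ) = 0 ∧ (u:ℕ) = N - 1) then -a else 0 := by
  have hu := u.isLt
  have hw := w.isLt
  have hval := fin_sub_val u w
  simp only [Smat, Matrix.of_apply, cvec]
  rw [hval]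
  split_ifs <;> first | rfl | omega | (exfalso; omega)

lemma Smat_mk_apply (a : ℝ) {N : ℕ} (hN : 3 ≤ N) (x y : ℕ) (hx : x < N) (hy : y < N) :
    Smat a N ⟨x, hx⟩ ⟨y, hy⟩ = if x = y + 1 ∨ (x = 0 ∧ y = N - 1) then a
      else if y = x + 1 ∨ (y = 0 ∧ x = N - 1) then -a else 0 :=
  Smat_apply_eq a hN _ _

lemma Smat_skew (a : ℝ) {N : ℕ} (hN : 3 ≤ N) : (Smat a N)ᵀ = -(Smat a N) := by
  ext i j
  rw [Matrix.transpose_apply, Matrix.neg_apply, Smat_apply_eq a hN, Smat_apply_eq a hN]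
  have hi := i.isLt
  have hj := j.isLt
  split_ifs <;> first | (exfalso; omega) | ring

lemma pair_det (a : ℝ) {n : ℕ} (hn : 2 ≤ n) (i j : Fin (2*n)) (hlt : (i:ℕ) < (j:ℕ))
    (hodd : ((j:ℕ) - (i:ℕ)) % 2 = 1) (s : Finset (Fin (2*n))) (hs : s = {i, j}) :
    ((Smat a (2*n)).submatrix
      (Subtype.val : {x : Fin (2*n) // x ∉ s} → Fin (2*n))
      Subtype.val).det = a ^ (2*n - 2) := by
  subst hs
  haveI : NeZero (2*n) := ⟨by omega⟩
  have hN3 : 3 ≤ 2*n := by omega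
  have hi := i.isLt
  have hj := j.isLt
  set g : ℕ := (j:ℕ) - (i:ℕ) with hg
  set m₁ : ℕ := g - 1 with hm₁
  set m₂ : ℕ := 2*n - 1 - g with hm₂
  set off : Fin m₁ ⊕ Fin m₂ → ℕ :=
    Sum.elim (fun k => (k:ℕ) + 1) (fun k => g + 1 + (k:ℕ)) with hoff
  have hoff_lt : ∀ z, off z < 2*n := by
    rintro (k | k) <;> simp only [hoff, Sum.elim_inl, Sum.elim_inr] <;>
      [(have := k.isLt); (have := k.isLt)] <;> omega
  have hoff_pos : ∀ z, 1 ≤ off z := by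
    rintro (k | k) <;> simp only [hoff, Sum.elim_inl, Sum.elim_inr] <;> omega
  have hoff_ne : ∀ z, off z ≠ g := by
    rintro (k | k) <;> simp only [hoff, Sum.elim_inl, Sum.elim_inr] <;>
      [(have := k.isLt); (have := k.isLt)] <;> omega
  set f : Fin m₁ ⊕ Fin m₂ → Fin (2*n) := fun z => i + ⟨off z, hoff_lt z⟩ with hf
  have hij_fin : i + (⟨g, by omega⟩ : Fin (2*n)) = j := by
    apply Fin.ext
    rw [Fin.add_def]
    show ((i:ℕ) + g) % (2*n) = (j:ℕ)
    rw [Nat.mod_eq_of_lt (by omega)]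
    omega
  have hmem : ∀ z, f z ∉ ({i, j} : Finset (Fin (2*n))) := by
    intro z
    simp only [Finset.mem_insert, Finset.mem_singleton, not_or]
    constructor
    · intro h
      rw [hf] at h
      simp only at h
      have h2 := add_eq_left.mp h
      rw [Fin.ext_iff] at h2
      simp only [Fin.val_zero] at h2
      exact absurd h2 (by have := hoff_pos z; omega)
    · intro h
      rw [hf] at h
      simp only at h
      rw [← hij_fin] at h
      have h2 := add_left_cancel h
      rw [Fin.ext_iff] at h2
      simp only at h2
      exact hoff_ne z h2
  set f' : Fin m₁ ⊕ Fin m₂ → {x : Fin (2*n) // x ∉ ({i, j} : Finset (Fin (2*n)))} :=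
    fun z => ⟨f z, hmem z⟩ with hf'
  have hinj : Function.Injective f' := by
    intro z w h
    have h2 : f z = f w := congrArg Subtype.val h
    rw [hf] at h2
    simp only at h2
    have h3 := add_left_cancel h2
    rw [Fin.ext_iff] at h3
    simp only at h3
    rcases z with k | k <;> rcases w with k' | k' <;>
      simp only [hoff, Sum.elim_inl, Sum.elim_inr] at h3 <;>
      (have hk := k.isLt; have hk' := k'.isLt) <;>
      first
        | (congr 1; exact Fin.ext (by omega))
        | (exfalso; omega)
  have hcard : Fintype.card (Fin m₁ ⊕ Fin m₂)
      = Fintype.card {x : Fin (2*n) // x ∉ ({i, j} : Finset (Fin (2*n)))} := by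
    have hij_ne : i ≠ j := Fin.ne_of_val_ne (by omega)
    have h1 : Fintype.card {x : Fin (2*n) // x ∉ ({i, j} : Finset (Fin (2*n)))}
        = Fintype.card (Fin (2*n))
          - Fintype.card {x : Fin (2*n) // x ∈ ({i, j} : Finset (Fin (2*n)))} :=
      Fintype.card_subtype_compl _
    have h2 : Fintype.card {x : Fin (2*n) // x ∈ ({i, j} : Finset (Fin (2*n)))}
        = ({i, j} : Finset (Fin (2*n))).card :=
      Fintype.card_of_subtype _ (fun x => Iff.rfl)
    rw [h1, h2, Finset.card_pair hij_ne]
    simp only [Fintype.card_sum, Fintype.card_fin]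
    omega
  have hbij : Function.Bijective f' :=
    (Fintype.bijective_iff_injective_and_card f').mpr ⟨hinj, hcard⟩
  set e := Equiv.ofBijective f' hbij with he
  rw [← Matrix.det_submatrix_equiv_self e, Matrix.submatrix_submatrix]
  have hcomp : (Subtype.val ∘ e) = f := by
    funext z
    rfl
  rw [hcomp]
  have hblock : (Smat a (2*n)).submatrix f f
      = Matrix.fromBlocks (pathM a m₁) 0 0 (pathM a m₂) := by
    ext z w
    have hzw : (Smat a (2*n)).submatrix f f z w
        = Smat a (2*n) ⟨off z, hoff_lt z⟩ ⟨off w, hoff_lt w⟩ := by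
      rw [Matrix.submatrix_apply, hf]
      simp only [Smat, Matrix.of_apply]
      rw [add_sub_add_left_eq_sub]
    rw [hzw, Smat_mk_apply a hN3]
    rcases z with k | k <;> rcases w with k' | k' <;>
      simp only [hoff, Sum.elim_inl, Sum.elim_inr, Matrix.fromBlocks_apply₁₁,
        Matrix.fromBlocks_apply₁₂, Matrix.fromBlocks_apply₂₁, Matrix.fromBlocks_apply₂₂,
        pathM, Matrix.of_apply, Matrix.zero_apply] <;>
      (have hk := k.isLt; have hk' := k'.isLt) <;>
      split_ifs <;> first | rfl | (exfalso; first | omega | (simp only [false_and, and_false, or_false, false_or] at *; omega))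
  rw [hblock, Matrix.det_fromBlocks_zero₂₁]
  have he₁ : m₁ = 2 * (m₁ / 2) := by omega
  have he₂ : m₂ = 2 * (m₂ / 2) := by omega
  rw [he₁, he₂, pathM_det_even, pathM_det_even, ← pow_add]
  congr 1
  omega



theorem discrete_momentum_matrix_invertible (n : ℕ) (hn : 1 ≤ n) (L : ℝ) (hL : 0 < L)
    (y : ℤ → ℝ) (hper : ∀ i : ℤ, y (i + n) = y i + L) (hmono : ∀ i : ℤ, y i ≤ y (i + 1)) :
    let Δξ : ℝ := L / n
    let A : Matrix (Fin (2 * n)) (Fin (2 * n)) ℝ := fun i j =>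
      if (i : ℕ) = (j : ℕ) then (y (((i : ℕ) / 2 : ℕ) + 1) - y (((i : ℕ) / 2 : ℕ))) / Δξ
      else if (j : ℕ) = (i : ℕ) + 1 then -1 / Δξ
      else if (i : ℕ) = (j : ℕ) + 1 then 1 / Δξ
      else if (i : ℕ) = 0 ∧ (j : ℕ) = 2 * n - 1 then 1 / Δξ
      else if (i : ℕ) = 2 * n - 1 ∧ (j : ℕ) = 0 then -1 / Δξ
      else 0
    IsUnit A ∧ A.det ≥ (n : ℝ) ^ (2 * n) / L ^ (2 * n - 2) := by
  intro Δξ A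
  have hnR : (0:ℝ) < (n:ℝ) := by exact_mod_cast Nat.pos_of_ne_zero (by omega)
  have hΔpos : 0 < Δξ := div_pos hL hnR
  have hAij : ∀ i j : Fin (2*n), A i j =
      (if (i : ℕ) = (j : ℕ) then (y (((i : ℕ) / 2 : ℕ) + 1) - y (((i : ℕ) / 2 : ℕ))) / Δξ
      else if (j : ℕ) = (i : ℕ) + 1 then -1 / Δξ
      else if (i : ℕ) = (j : ℕ) + 1 then 1 / Δξ
      else if (i : ℕ) = 0 ∧ (j : ℕ) = 2 * n - 1 then 1 / Δξ
      else if (i : ℕ) = 2 * n - 1 ∧ (j : ℕ) = 0 then -1 / Δξ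
      else 0) := fun i j => rfl
  rcases eq_or_lt_of_le hn with h1 | h2
  · -- case n = 1
    have hn1 : n = 1 := h1.symm
    subst hn1
    have hy1 : y 1 = y 0 + L := by simpa using hper 0
    have hΔ : Δξ = L := by show L / ((1:ℕ):ℝ) = L; norm_num
    have e00 : A 0 0 = (y 1 - y 0) / Δξ := by rw [hAij]; norm_num
    have e11 : A 1 1 = (y 1 - y 0) / Δξ := by rw [hAij]; norm_num
    have e01 : A 0 1 = -1 / Δξ := by rw [hAij]; norm_num
    have e10 : A 1 0 = 1 / Δξ := by rw [hAij]; norm_num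
    have hdet : A.det = 1 + 1/L^2 := by
      rw [Matrix.det_fin_two, e00, e11, e01, e10, hΔ, hy1]
      field_simp
      ring
    constructor
    · refine (Matrix.isUnit_iff_isUnit_det A).mpr (isUnit_iff_ne_zero.mpr ?_)
      rw [hdet]
      positivity
    · rw [hdet]
      have hb : ((1:ℕ) : ℝ) ^ (2*1) / L ^ (2*1 - 2) = 1 := by norm_num
      rw [hb]
      have : (0:ℝ) ≤ 1/L^2 := by positivity
      linarith
  · -- case n ≥ 2
    have hn2 : 2 ≤ n := h2
    have hN3 : 3 ≤ 2*n := by omega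
    set a : ℝ := 1 / Δξ with ha
    -- A = diagonal + skew circulant
    have hA : A = Matrix.diagonal
        (fun i : Fin (2*n) => (y (((i : ℕ) / 2 : ℕ) + 1) - y (((i : ℕ) / 2 : ℕ))) / Δξ)
        + Smat a (2*n) := by
      ext i j
      have hi := i.isLt
      have hj := j.isLt
      rw [hAij, Matrix.add_apply, Matrix.diagonal_apply, Smat_apply_eq a hN3]
      simp only [Fin.ext_iff]
      split_ifs <;> first | (exfalso; omega) | (rw [ha]; ring) | ring
    rw [hA, det_diagonal_add]
    set dv : Fin (2*n) → ℝ :=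
      fun i : Fin (2*n) => (y (((i : ℕ) / 2 : ℕ) + 1) - y (((i : ℕ) / 2 : ℕ))) / Δξ with hdv
    have hdv_nonneg : ∀ i, 0 ≤ dv i := by
      intro i
      rw [hdv]
      exact div_nonneg (by have := hmono (((i:ℕ)/2 : ℕ) : ℤ); linarith) hΔpos.le
    -- all terms are nonnegative
    have hterm_nonneg : ∀ s : Finset (Fin (2*n)), 0 ≤ (∏ i ∈ s, dv i) *
        ((Smat a (2*n)).submatrix
          (Subtype.val : {x : Fin (2*n) // x ∉ s} → Fin (2*n)) Subtype.val).det := by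
      intro s
      apply mul_nonneg (Finset.prod_nonneg fun i _ => hdv_nonneg i)
      apply skew_det_nonneg
      ext z w
      rw [Matrix.transpose_apply, Matrix.neg_apply, Matrix.submatrix_apply,
        Matrix.submatrix_apply]
      have h := Matrix.ext_iff.mpr (Smat_skew a hN3) (z : Fin (2*n)) (w : Fin (2*n))
      rw [Matrix.transpose_apply, Matrix.neg_apply] at h
      exact h
    -- the selected pair subsets
    set Φ : Fin n × Fin n → Finset (Fin (2*n)) := fun pq =>
      {(⟨2 * (pq.1 : ℕ), by omega⟩ : Fin (2*n)), (⟨2 * (pq.2 : ℕ) + 1, by omega⟩ : Fin (2*n))}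
      with hΦ
    have hΦne : ∀ pq : Fin n × Fin n,
        (⟨2 * (pq.1 : ℕ), by omega⟩ : Fin (2*n)) ≠ (⟨2 * (pq.2 : ℕ) + 1, by omega⟩ : Fin (2*n)) := by
      intro pq h
      rw [Fin.ext_iff] at h
      simp only at h
      omega
    have hΦinj : ∀ x ∈ (Finset.univ : Finset (Fin n × Fin n)),
        ∀ y ∈ (Finset.univ : Finset (Fin n × Fin n)), Φ x = Φ y → x = y := by
      rintro ⟨p, q⟩ - ⟨p', q'⟩ - h
      rw [hΦ] at h
      simp only at h
      have h1 : (⟨2 * (p : ℕ), by omega⟩ : Fin (2*n)) ∈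
          ({(⟨2 * (p' : ℕ), by omega⟩ : Fin (2*n)), (⟨2 * (q' : ℕ) + 1, by omega⟩ : Fin (2*n))} :
            Finset (Fin (2*n))) := by
        rw [← h]; exact Finset.mem_insert_self _ _
      have h2 : (⟨2 * (q : ℕ) + 1, by omega⟩ : Fin (2*n)) ∈
          ({(⟨2 * (p' : ℕ), by omega⟩ : Fin (2*n)), (⟨2 * (q' : ℕ) + 1, by omega⟩ : Fin (2*n))} :
            Finset (Fin (2*n))) := by
        rw [← h]
        exact Finset.mem_insert_of_mem (Finset.mem_singleton_self _)
      simp only [Finset.mem_insert, Finset.mem_singleton, Fin.ext_iff] at h1 h2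
      have hp : p = p' := by
        rcases h1 with h1 | h1
        · exact Fin.ext (by omega)
        · omega
      have hq : q = q' := by
        rcases h2 with h2 | h2
        · omega
        · exact Fin.ext (by omega)
      rw [hp, hq]
    -- value of the selected terms
    have hval : ∀ pq : Fin n × Fin n, (∏ i ∈ Φ pq, dv i) *
        ((Smat a (2*n)).submatrix
          (Subtype.val : {x : Fin (2*n) // x ∉ Φ pq} → Fin (2*n)) Subtype.val).det
        = (dv ⟨2 * (pq.1 : ℕ), by omega⟩ * dv ⟨2 * (pq.2 : ℕ) + 1, by omega⟩) * a ^ (2*n - 2) := by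
      rintro ⟨p, q⟩
      have hprod : (∏ i ∈ Φ (p, q), dv i)
          = dv ⟨2 * (p : ℕ), by omega⟩ * dv ⟨2 * (q : ℕ) + 1, by omega⟩ := by
        rw [hΦ]
        exact Finset.prod_pair (hΦne (p, q))
      rw [hprod]
      congr 1
      rcases le_or_gt (p:ℕ) (q:ℕ) with hpq | hpq
      · refine pair_det a hn2 (⟨2 * (p : ℕ), by omega⟩ : Fin (2*n))
          (⟨2 * (q : ℕ) + 1, by omega⟩ : Fin (2*n)) ?_ ?_ _ rfl
        · show 2 * (p:ℕ) < 2 * (q:ℕ) + 1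
          omega
        · show (2 * (q:ℕ) + 1 - 2 * (p:ℕ)) % 2 = 1
          omega
      · refine pair_det a hn2 (⟨2 * (q : ℕ) + 1, by omega⟩ : Fin (2*n))
          (⟨2 * (p : ℕ), by omega⟩ : Fin (2*n)) ?_ ?_ _ (Finset.pair_comm _ _)
        · show 2 * (q:ℕ) + 1 < 2 * (p:ℕ)
          omega
        · show (2 * (p:ℕ) - (2 * (q:ℕ) + 1)) % 2 = 1
          omega
    -- telescoping sums of the diagonal values
    have hΔdef : Δξ = L / (n:ℝ) := rfl
    have hyn : y (n:ℤ) = y 0 + L := by simpa using hper 0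
    have htele : ∑ m ∈ Finset.range n, (y ((m:ℤ) + 1) - y (m:ℤ)) = L := by
      have h := Finset.sum_range_sub (f := fun m : ℕ => y (m:ℤ)) n
      simp only [Nat.cast_add, Nat.cast_one] at h
      rw [h, hyn, Nat.cast_zero]
      ring
    have hLd : L / Δξ = (n:ℝ) := by
      rw [hΔdef]
      field_simp
    have hsum_dv : ∑ p : Fin n, dv ⟨2 * (p:ℕ), by omega⟩ = (n:ℝ) := by
      have hval2 : ∀ p : Fin n, dv ⟨2 * (p:ℕ), by omega⟩
          = (y (((p:ℕ):ℤ) + 1) - y ((p:ℕ):ℤ)) / Δξ := by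
        intro p
        rw [hdv]
        simp only
        congr 2 <;> rw [show ((⟨2 * (p:ℕ), by omega⟩ : Fin (2*n)) : ℕ) / 2 = (p:ℕ) from by
          show 2 * (p:ℕ) / 2 = (p:ℕ); omega]
      rw [Finset.sum_congr rfl (fun p _ => hval2 p)]
      rw [Fin.sum_univ_eq_sum_range (fun m => (y ((m:ℤ) + 1) - y ((m:ℕ):ℤ)) / Δξ)]
      rw [← Finset.sum_div, htele, hLd]
    have hsum_dv' : ∑ q : Fin n, dv ⟨2 * (q:ℕ) + 1, by omega⟩ = (n:ℝ) := by
      have hval2 : ∀ q : Fin n, dv ⟨2 * (q:ℕ) + 1, by omega⟩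
          = (y (((q:ℕ):ℤ) + 1) - y ((q:ℕ):ℤ)) / Δξ := by
        intro q
        rw [hdv]
        simp only
        congr 2 <;> rw [show ((⟨2 * (q:ℕ) + 1, by omega⟩ : Fin (2*n)) : ℕ) / 2 = (q:ℕ) from by
          show (2 * (q:ℕ) + 1) / 2 = (q:ℕ); omega]
      rw [Finset.sum_congr rfl (fun q _ => hval2 q)]
      rw [Fin.sum_univ_eq_sum_range (fun m => (y ((m:ℤ) + 1) - y ((m:ℕ):ℤ)) / Δξ)]
      rw [← Finset.sum_div, htele, hLd]
    -- the factored value of the selected sum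
    have haval : a = (n:ℝ) / L := by
      rw [ha, hΔdef]
      field_simp
    have hfact : (∑ pq : Fin n × Fin n,
          (dv ⟨2 * (pq.1:ℕ), by omega⟩ * dv ⟨2 * (pq.2:ℕ) + 1, by omega⟩) * a ^ (2*n - 2))
        = (n:ℝ) ^ (2*n) / L ^ (2*n - 2) := by
      rw [← Finset.sum_mul]
      have hps : (∑ pq : Fin n × Fin n,
            dv ⟨2 * (pq.1:ℕ), by omega⟩ * dv ⟨2 * (pq.2:ℕ) + 1, by omega⟩)
          = (∑ p : Fin n, dv ⟨2 * (p:ℕ), by omega⟩)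
            * (∑ q : Fin n, dv ⟨2 * (q:ℕ) + 1, by omega⟩) := by
        rw [Finset.sum_mul_sum]
        rw [Fintype.sum_prod_type]
      rw [hps, hsum_dv, hsum_dv', haval, div_pow]
      have hexp : (n:ℝ) ^ (2*n) = (n:ℝ) ^ (2*n - 2) * (n:ℝ) ^ 2 := by
        rw [← pow_add]
        congr 1
        omega
      rw [hexp]
      have hLne : L ^ (2*n-2) ≠ 0 := by positivity
      field_simp
    -- main bound
    have hmain : (n:ℝ) ^ (2*n) / L ^ (2*n - 2)
        ≤ ∑ s : Finset (Fin (2*n)), (∏ i ∈ s, dv i) *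
          ((Smat a (2*n)).submatrix
            (Subtype.val : {x : Fin (2*n) // x ∉ s} → Fin (2*n)) Subtype.val).det := by
      have h1 : ∑ s ∈ Finset.image Φ Finset.univ, (∏ i ∈ s, dv i) *
            ((Smat a (2*n)).submatrix
              (Subtype.val : {x : Fin (2*n) // x ∉ s} → Fin (2*n)) Subtype.val).det
          = ∑ pq : Fin n × Fin n, (∏ i ∈ Φ pq, dv i) *
            ((Smat a (2*n)).submatrix
              (Subtype.val : {x : Fin (2*n) // x ∉ Φ pq} → Fin (2*n)) Subtype.val).det :=
        Finset.sum_image hΦinj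
      have h2 : ∑ pq : Fin n × Fin n, (∏ i ∈ Φ pq, dv i) *
            ((Smat a (2*n)).submatrix
              (Subtype.val : {x : Fin (2*n) // x ∉ Φ pq} → Fin (2*n)) Subtype.val).det
          = (n:ℝ) ^ (2*n) / L ^ (2*n - 2) := by
        rw [Finset.sum_congr rfl (fun pq _ => hval pq)]
        exact hfact
      calc (n:ℝ) ^ (2*n) / L ^ (2*n - 2)
          = ∑ s ∈ Finset.image Φ Finset.univ, (∏ i ∈ s, dv i) *
            ((Smat a (2*n)).submatrix
              (Subtype.val : {x : Fin (2*n) // x ∉ s} → Fin (2*n)) Subtype.val).det := by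
            rw [h1, h2]
        _ ≤ _ := Finset.sum_le_sum_of_subset_of_nonneg (Finset.subset_univ _)
            (fun s _ _ => hterm_nonneg s)
    have hpos : (0:ℝ) < (n:ℝ) ^ (2*n) / L ^ (2*n - 2) := by positivity
    constructor
    · refine (Matrix.isUnit_iff_isUnit_det _).mpr (isUnit_iff_ne_zero.mpr ?_)
      rw [det_diagonal_add]
      exact ne_of_gt (lt_of_lt_of_le hpos hmain)
    · exact hmain
end

section
/- Let Δx > 0, κ > 0 with e^κ + e^{-κ} = 2 + Δx², and n ≥ 1. Define g_j = (1/√(4 + Δx²)) · (e^{-κ j} + e^{κ(j - n)})/(1 - e^{-κ n}) for j ∈ ℤ, extended n-periodically. Then g satisfies the difference equation g_j - (g_{j+1} - 2g_j + g_{j-1})/Δx² = δ_{0,j}/Δx for all j ∈ {0,…,n-1} (indices mod n), where δ is the Kronecker delta. -/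
theorem periodic_greens_function (Δx κ : ℝ) (hΔx : 0 < Δx) (hκ : 0 < κ)
    (hchar : Real.exp κ + Real.exp (-κ) = 2 + Δx ^ 2) (n : ℕ) (hn : 1 ≤ n) :
    let g : ℤ → ℝ := fun j =>
      (1 / Real.sqrt (4 + Δx ^ 2)) *
        ((Real.exp (-κ * ((j % (n : ℤ) : ℤ) : ℝ)) +
          Real.exp (κ * (((j % (n : ℤ) : ℤ) : ℝ) - n))) / (1 - Real.exp (-κ * n)))
    ∀ j : ℤ, 0 ≤ j → j < n →
      g j - (g (j + 1) - 2 * g j + g (j - 1)) / Δx ^ 2 =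
        (if j = 0 then (1 : ℝ) else 0) / Δx := by
  intro g j hj0 hjn
  set s := Real.sqrt (4 + Δx ^ 2) with hs
  have hs2 : s ^ 2 = 4 + Δx ^ 2 := Real.sq_sqrt (by positivity)
  have hs0 : 0 < s := Real.sqrt_pos.mpr (by positivity)
  have hn1 : (1:ℝ) ≤ (n:ℝ) := by exact_mod_cast hn
  have hDlt : Real.exp (-κ * n) < 1 := by
    rw [Real.exp_lt_one_iff]; nlinarith
  have hD : (0:ℝ) < 1 - Real.exp (-κ * n) := by linarith
  have hAB : Real.exp κ * Real.exp (-κ) = 1 := by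
    rw [← Real.exp_add]; simp
  have hdiff : Real.exp κ - Real.exp (-κ) = Δx * s := by
    have h1 : 0 < Real.exp κ - Real.exp (-κ) := by
      have := Real.exp_lt_exp.mpr (show -κ < κ by linarith)
      linarith
    nlinarith [mul_pos hΔx hs0]
  have hsne : s ≠ 0 := ne_of_gt hs0
  have hDne : (1 - Real.exp (-κ * n)) ≠ 0 := ne_of_gt hD
  have hΔne : Δx ≠ 0 := ne_of_gt hΔx
  set F : ℝ → ℝ := fun t =>
    (1 / s) * ((Real.exp (-κ * t) + Real.exp (κ * (t - n))) / (1 - Real.exp (-κ * n))) with hF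
  have hF1 : ∀ t : ℝ, F (t + 1) + F (t - 1) = (2 + Δx ^ 2) * F t := by
    intro t
    simp only [hF]
    have e1 : Real.exp (-κ * (t + 1)) = Real.exp (-κ * t) * Real.exp (-κ) := by
      rw [← Real.exp_add]; ring_nf
    have e2 : Real.exp (-κ * (t - 1)) = Real.exp (-κ * t) * Real.exp κ := by
      rw [← Real.exp_add]; ring_nf
    have e3 : Real.exp (κ * (t + 1 - n)) = Real.exp (κ * (t - n)) * Real.exp κ := by
      rw [← Real.exp_add]; ring_nf
    have e4 : Real.exp (κ * (t - 1 - n)) = Real.exp (κ * (t - n)) * Real.exp (-κ) := by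
      rw [← Real.exp_add]; ring_nf
    rw [e1, e2, e3, e4]
    set A := Real.exp (-κ * t)
    set B := Real.exp (κ * (t - (n:ℝ)))
    set E := Real.exp (-κ * (n:ℝ))
    set P := Real.exp κ
    set Q := Real.exp (-κ)
    field_simp
    linear_combination (A + B) * hchar
  have hF2 : F (n : ℝ) = F 0 := by
    simp only [hF]
    have e1 : -κ * (n:ℝ) = κ * (0 - n) := by ring
    have e2 : κ * ((n:ℝ) - n) = -κ * 0 := by ring
    rw [e1, e2]; ring
  have hF3 : F ((n : ℝ) - 1) = F (-1) - Δx := by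
    simp only [hF]
    have e1 : Real.exp (-κ * ((n:ℝ) - 1)) = Real.exp (-κ * n) * Real.exp κ := by
      rw [← Real.exp_add]; ring_nf
    have e2 : Real.exp (κ * ((n:ℝ) - 1 - n)) = Real.exp (-κ) := by ring_nf
    have e3 : Real.exp (-κ * (-1 : ℝ)) = Real.exp κ := by ring_nf
    have e4 : Real.exp (κ * ((-1:ℝ) - n)) = Real.exp (-κ * n) * Real.exp (-κ) := by
      rw [← Real.exp_add]; ring_nf
    rw [e1, e2, e3, e4]
    set E := Real.exp (-κ * (n:ℝ))
    set P := Real.exp κ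
    set Q := Real.exp (-κ)
    field_simp
    linear_combination (E - 1) * hdiff
  have hg : ∀ m : ℤ, g m = F ((m % (n:ℤ) : ℤ) : ℝ) := fun m => rfl
  have hjmod : j % (n:ℤ) = j := Int.emod_eq_of_lt hj0 hjn
  clear_value F
  rw [hg, hg, hg, hjmod]
  have hFp : F (((j + 1) % (n:ℤ) : ℤ) : ℝ) = F ((j:ℝ) + 1) := by
    by_cases hjn1 : j + 1 = (n:ℤ)
    · rw [hjn1, Int.emod_self]
      have : ((j:ℝ) + 1) = (n:ℝ) := by
        have := congrArg (fun z : ℤ => (z : ℝ)) hjn1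
        push_cast at this; linarith
      rw [this, hF2]; norm_num
    · rw [Int.emod_eq_of_lt (by omega) (by omega)]
      push_cast
      ring_nf
  have hFm : F (((j - 1) % (n:ℤ) : ℤ) : ℝ) =
      F ((j:ℝ) - 1) - (if j = 0 then (1:ℝ) else 0) * Δx := by
    by_cases hj : j = 0
    · subst hj
      have hmod : (0 - 1) % (n:ℤ) = (n:ℤ) - 1 := by
        rw [show (0 - 1 : ℤ) = (n:ℤ) - 1 + (n:ℤ) * (-1) by ring, Int.add_mul_emod_self_left]
        exact Int.emod_eq_of_lt (by omega) (by omega)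
      rw [hmod]
      have hc : (((n:ℤ) - 1 : ℤ) : ℝ) = (n:ℝ) - 1 := by push_cast; ring
      rw [hc, hF3]
      norm_num
    · rw [Int.emod_eq_of_lt (by omega) (by omega)]
      rw [if_neg hj]
      push_cast
      ring_nf
  rw [hFp, hFm]
  have key := hF1 (j:ℝ)
  field_simp
  ring_nf
  ring_nf at key
  by_cases hj : j = 0
  · simp only [if_pos hj]
    linear_combination (-1) * key
  · simp only [if_neg hj]
    linear_combination (-1) * key
end

section
/- Let a, b ∈ ℝ with a > 0 and define u(x) = A e^x + B e^{-x} on an interval [y₁, y₂] with y₁ < y₂. Set ȳ = (y₁+y₂)/2, δy = (y₂-y₁)/2, ū = (u(y₂)+u(y₁))/2, δu = (u(y₂)-u(y₁))/2. Then (1/2)∫_{y₁}^{y₂} (u² + u_x²) dx = ū²·tanh(δy) + (δu)²·coth(δy). -/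
theorem energy_between_peaks (A B y₁ y₂ : ℝ) (h : y₁ < y₂) :
    let u : ℝ → ℝ := fun x => A * Real.exp x + B * Real.exp (-x)
    let ux : ℝ → ℝ := fun x => A * Real.exp x - B * Real.exp (-x)
    let ubar := (u y₂ + u y₁) / 2
    let δu := (u y₂ - u y₁) / 2
    let δy := (y₂ - y₁) / 2
    (1 / 2) * ∫ x in y₁..y₂, ((u x) ^ 2 + (ux x) ^ 2) =
      ubar ^ 2 * Real.tanh δy + δu ^ 2 * (Real.cosh δy / Real.sinh δy) := by
  intro u ux ubar δu δy
  have hderiv : ∀ x : ℝ, HasDerivAt (fun x => A ^ 2 * Real.exp (2 * x) - B ^ 2 * Real.exp (-(2 * x))) ((u x) ^ 2 + (ux x) ^ 2) x := by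
    intro x
    have e1 : HasDerivAt (fun x : ℝ => Real.exp (2 * x)) (Real.exp (2 * x) * 2) x := by
      simpa using (((hasDerivAt_id x).const_mul 2).exp)
    have e2 : HasDerivAt (fun x : ℝ => Real.exp (-(2 * x))) (Real.exp (-(2 * x)) * (-2)) x := by
      simpa using ((((hasDerivAt_id x).const_mul 2).neg).exp)
    have : HasDerivAt (fun x => A ^ 2 * Real.exp (2 * x) - B ^ 2 * Real.exp (-(2 * x))) (A ^ 2 * (Real.exp (2 * x) * 2) - B ^ 2 * (Real.exp (-(2 * x)) * -2)) x := (e1.const_mul (A ^ 2)).sub (e2.const_mul (B ^ 2))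
    convert this using 1
    have h1 : Real.exp (2 * x) = Real.exp x ^ 2 := by
      rw [two_mul, Real.exp_add]; ring
    have h2 : Real.exp (-(2 * x)) = Real.exp (-x) ^ 2 := by
      rw [two_mul, neg_add, Real.exp_add]; ring
    simp only [u, ux, h1, h2]
    ring
  have hint : ∫ x in y₁..y₂, ((u x) ^ 2 + (ux x) ^ 2) =
      (A ^ 2 * Real.exp (2 * y₂) - B ^ 2 * Real.exp (-(2 * y₂))) -
      (A ^ 2 * Real.exp (2 * y₁) - B ^ 2 * Real.exp (-(2 * y₁))) := by
    refine intervalIntegral.integral_eq_sub_of_hasDerivAt (fun x _ => hderiv x) ?_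
    apply Continuous.intervalIntegrable
    fun_prop
  rw [hint]
  have hδ : (0:ℝ) < δy := by simp only [δy]; linarith
  have hsinh : Real.sinh δy ≠ 0 := by
    simpa [Real.sinh_eq_zero] using hδ.ne'
  have h1 : Real.exp (2 * y₂) = Real.exp y₂ ^ 2 := by rw [two_mul, Real.exp_add]; ring
  have h2 : Real.exp (2 * y₁) = Real.exp y₁ ^ 2 := by rw [two_mul, Real.exp_add]; ring
  have h3 : Real.exp (-(2 * y₂)) = (Real.exp y₂)⁻¹ ^ 2 := by
    rw [← Real.exp_neg]; rw [show -(2*y₂) = -y₂ + -y₂ by ring, Real.exp_add]; ring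
  have h4 : Real.exp (-(2 * y₁)) = (Real.exp y₁)⁻¹ ^ 2 := by
    rw [← Real.exp_neg]; rw [show -(2*y₁) = -y₁ + -y₁ by ring, Real.exp_add]; ring
  have hrel : Real.exp y₂ = Real.exp δy ^ 2 * Real.exp y₁ := by
    rw [sq, ← Real.exp_add, ← Real.exp_add]
    congr 1
    simp only [δy]; ring
  have hr : Real.exp δy ≠ 0 := Real.exp_ne_zero _
  have hp : Real.exp y₁ ≠ 0 := Real.exp_ne_zero _
  have hs' : Real.exp δy - (Real.exp δy)⁻¹ ≠ 0 := by
    intro hc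
    apply hsinh
    rw [Real.sinh_eq, Real.exp_neg, hc, zero_div]
  have hr1 : 1 < Real.exp δy := by
    simpa using Real.exp_lt_exp.mpr hδ
  rw [Real.tanh_eq_sinh_div_cosh, Real.sinh_eq, Real.cosh_eq]
  simp only [ubar, δu, u, Real.exp_neg, h1, h2, h3, h4, hrel]
  set r := Real.exp δy with hrdef
  set p := Real.exp y₁ with hpdef
  clear_value r p
  have hs2 : r ^ 2 - 1 ≠ 0 := by nlinarith
  have hs3 : r - r⁻¹ ≠ 0 := by
    intro hc
    apply hs2
    have : r * (r - r⁻¹) = r ^ 2 - 1 := by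
      field_simp
    rw [hc, mul_zero] at this
    linarith
  have hs4 : r ^ 2 + 1 ≠ 0 := by positivity
  have hs5 : r + r⁻¹ ≠ 0 := by positivity
  have t1 : (r - r⁻¹) / 2 / ((r + r⁻¹) / 2) = (r ^ 2 - 1) / (r ^ 2 + 1) := by
    rw [div_eq_div_iff (by positivity) hs4]
    field_simp
  have t2 : (r + r⁻¹) / 2 / ((r - r⁻¹) / 2) = (r ^ 2 + 1) / (r ^ 2 - 1) := by
    rw [div_eq_div_iff (by simpa using div_ne_zero hs3 (two_ne_zero)) hs2]
    field_simp
  rw [t1, t2]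
  field_simp
  ring
end

section
/- Let Π be a real 2×2 matrix with det Π = 1 that is entrywise ≥ A entrywise, where A = [[1 + Δξ², Δξ], [Δξ, 1]] with Δξ > 0, and Π has all entries positive. Then the eigenvalues of Π are real and distinct, with largest eigenvalue ϖ⁺ > 1 and smallest eigenvalue ϖ⁻ = 1/ϖ⁺ < 1. -/
theorem monodromy_eigenvalues_distinct (Δξ : ℝ) (hΔξ : 0 < Δξ)
    (P : Matrix (Fin 2) (Fin 2) ℝ) (hdet : P.det = 1)
    (hge : ∀ i j, (!![1 + Δξ ^ 2, Δξ; Δξ, 1] : Matrix (Fin 2) (Fin 2) ℝ) i j ≤ P i j)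
    (hpos : ∀ i j, 0 < P i j) :
    ∃ wp wm : ℝ, wp ≠ wm ∧ 1 < wp ∧ wm = 1 / wp ∧ wm < 1 ∧
      P.charpoly.IsRoot wp ∧ P.charpoly.IsRoot wm := by
  have h00 := hge 0 0
  have h11 := hge 1 1
  simp [Matrix.cons_val_zero, Matrix.cons_val_one] at h00 h11
  set t : ℝ := P.trace with ht
  have htr : t = P 0 0 + P 1 1 := by
    simp [ht, Matrix.trace_fin_two]
  have ht2 : 2 < t := by
    nlinarith [sq_nonneg Δξ]
  have hd : 0 < t ^ 2 - 4 := by nlinarith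
  set s : ℝ := Real.sqrt (t ^ 2 - 4) with hs
  have hspos : 0 < s := Real.sqrt_pos.mpr hd
  have hs2 : s ^ 2 = t ^ 2 - 4 := Real.sq_sqrt hd.le
  have hwp : 1 < (t + s) / 2 := by nlinarith
  have hdet' : P 0 0 * P 1 1 - P 0 1 * P 1 0 = 1 := by
    rw [Matrix.det_fin_two] at hdet; linarith
  have hcp : P.charpoly = (Polynomial.X - Polynomial.C (P 0 0)) *
      (Polynomial.X - Polynomial.C (P 1 1)) - Polynomial.C (P 0 1) * Polynomial.C (P 1 0) := by
    rw [Matrix.charpoly, Matrix.det_fin_two]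
    simp [Matrix.charmatrix_apply_eq, Matrix.charmatrix_apply_ne]
  refine ⟨(t + s) / 2, (t - s) / 2, by nlinarith, hwp, ?_, by nlinarith, ?_, ?_⟩
  · field_simp
    nlinarith
  · simp only [Polynomial.IsRoot, hcp, Polynomial.eval_sub, Polynomial.eval_mul,
      Polynomial.eval_X, Polynomial.eval_C]
    nlinarith [htr, hdet', hs2]
  · simp only [Polynomial.IsRoot, hcp, Polynomial.eval_sub, Polynomial.eval_mul,
      Polynomial.eval_X, Polynomial.eval_C]
    nlinarith [htr, hdet', hs2]
end

section
/- Suppose φ : ℝ → ℝ is three times continuously differentiable, φ(z) ≠ c for all z, and φ satisfies -cφ' + cφ''' + 3φφ' - 2φ'φ'' - φφ''' = 0. Then the function z ↦ (c - φ(z))²·(φ''(z) - φ(z)) is constant. -/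
theorem traveling_wave_first_integral (c : ℝ) (φ : ℝ → ℝ) (hφ : ContDiff ℝ 3 φ)
    (hne : ∀ z, φ z ≠ c)
    (hODE : ∀ z, -c * deriv φ z + c * deriv (deriv (deriv φ)) z + 3 * φ z * deriv φ z -
        2 * deriv φ z * deriv (deriv φ) z - φ z * deriv (deriv (deriv φ)) z = 0) :
    ∃ k : ℝ, ∀ z, (c - φ z) ^ 2 * (deriv (deriv φ) z - φ z) = k := by
  have h3 : ContDiff ℝ ((2 : ℕ∞) + 1) φ := by exact_mod_cast hφ
  have h2 : ContDiff ℝ 2 (deriv φ) := (contDiff_succ_iff_deriv.mp h3).2.2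
  have h2' : ContDiff ℝ ((1 : ℕ∞) + 1) (deriv φ) := by exact_mod_cast h2
  have h1 : ContDiff ℝ 1 (deriv (deriv φ)) := (contDiff_succ_iff_deriv.mp h2').2.2
  have hd0 : Differentiable ℝ φ := hφ.differentiable (by norm_num)
  have hd1 : Differentiable ℝ (deriv φ) := h2.differentiable (by norm_num)
  have hd2 : Differentiable ℝ (deriv (deriv φ)) := h1.differentiable (by norm_num)
  set F : ℝ → ℝ := fun z => (c - φ z) ^ 2 * (deriv (deriv φ) z - φ z) with hF
  have hder : ∀ z, HasDerivAt F
      (2 * (c - φ z) * (-(deriv φ z)) * (deriv (deriv φ) z - φ z)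
        + (c - φ z) ^ 2 * (deriv (deriv (deriv φ)) z - deriv φ z)) z := by
    intro z
    have hφ' : HasDerivAt φ (deriv φ z) z := (hd0 z).hasDerivAt
    have hφ'' : HasDerivAt (deriv φ) (deriv (deriv φ) z) z := (hd1 z).hasDerivAt
    have hφ''' : HasDerivAt (deriv (deriv φ)) (deriv (deriv (deriv φ)) z) z :=
      (hd2 z).hasDerivAt
    have ha : HasDerivAt (fun z => (c - φ z) ^ 2) (2 * (c - φ z) * (-(deriv φ z))) z := by
      have := ((hasDerivAt_const z c).fun_sub hφ').fun_pow 2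
      simpa [mul_comm, mul_assoc, mul_left_comm] using this
    have hb : HasDerivAt (fun z => deriv (deriv φ) z - φ z)
        (deriv (deriv (deriv φ)) z - deriv φ z) z := hφ'''.sub hφ'
    exact ha.mul hb
  have hFd : Differentiable ℝ F := fun z => (hder z).differentiableAt
  have hF0 : ∀ z, deriv F z = 0 := by
    intro z
    rw [(hder z).deriv]
    linear_combination (c - φ z) * hODE z
  exact ⟨F 0, fun z => is_const_of_deriv_eq_zero hFd hF0 z 0⟩
end
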